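/- In the free abelian group of monomials in variables Y_{i,s} (i in a finite index set I, s an integer), the product of two right-negative monomials is right-negative. Here a monomial m = ∏ Y_{i,s}^{u_{i,s}} (finitely many u_{i,s} nonzero) is right-negative if for every pair (i,s) with u_{i,s} ≠ 0 such that u_{j,t} = 0 for all j ∈ I and all t > s, one has u_{i,s} < 0. -/
import Mathlib


/-- A monomial (finitely supported exponent function) is right-negative if for every
pair `(i,s)` with nonzero exponent such that all exponents at spectral parameters `t > s`
vanish, the exponent at `(i,s)` is strictly negative. -/
def RightNegative {I : Type*} (u : (I × ℤ) →₀ ℤ) : Prop :=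
  ∀ (i : I) (s : ℤ), u (i, s) ≠ 0 → (∀ (j : I) (t : ℤ), s < t → u (j, t) = 0) →
    u (i, s) < 0

/-- Auxiliary: if the sum vanishes above `s`, so does each right-negative summand. -/
lemma rightNegative_vanish_above {I : Type*} (u v : (I × ℤ) →₀ ℤ)
    (hu : RightNegative u) (hv : RightNegative v) (s : ℤ)
    (h : ∀ (j : I) (t : ℤ), s < t → u (j, t) + v (j, t) = 0) :
    ∀ (j : I) (t : ℤ), s < t → u (j, t) = 0 := by
  by_contra hc
  push_neg at hc
  obtain ⟨j, t, hst, hne⟩ := hc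
  set T : Finset (I × ℤ) := u.support.filter (fun p => s < p.2) with hT
  have hTne : T.Nonempty := ⟨(j, t), by simp [hT, Finsupp.mem_support_iff, hne, hst]⟩
  obtain ⟨p, hpT, hpmax⟩ := T.exists_max_image Prod.snd hTne
  obtain ⟨j₀, t₀⟩ := p
  simp only [hT, Finset.mem_filter, Finsupp.mem_support_iff] at hpT
  obtain ⟨hu0, hst₀⟩ := hpT
  -- everything above t₀ vanishes for u
  have huab : ∀ (k : I) (r : ℤ), t₀ < r → u (k, r) = 0 := by
    intro k r hr
    by_contra hk
    have : (k, r) ∈ T := by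
      simp [hT, Finsupp.mem_support_iff, hk, lt_trans hst₀ hr]
    exact absurd (hpmax _ this) (by simpa using hr)
  have hult : u (j₀, t₀) < 0 := hu j₀ t₀ hu0 huab
  have hveq : v (j₀, t₀) = -u (j₀, t₀) := by
    have := h j₀ t₀ hst₀; linarith
  have hvab : ∀ (k : I) (r : ℤ), t₀ < r → v (k, r) = 0 := by
    intro k r hr
    have h1 := h k r (lt_trans hst₀ hr)
    have h2 := huab k r hr
    linarith
  have hvlt : v (j₀, t₀) < 0 := hv j₀ t₀ (by rw [hveq]; exact neg_ne_zero.mpr (ne_of_lt hult)) hvab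
  rw [hveq] at hvlt
  linarith

/-- The product (written additively on exponents) of two right-negative monomials is
right-negative. -/
theorem product_of_rightNegative_is_rightNegative {I : Type*} [Fintype I]
    (u v : (I × ℤ) →₀ ℤ) (hu : RightNegative u) (hv : RightNegative v) :
    RightNegative (u + v) := by
  intro i s hne h
  simp only [Finsupp.add_apply] at hne h ⊢
  have hu0 := rightNegative_vanish_above u v hu hv s h
  have hv0 := rightNegative_vanish_above v u hv hu s (fun j t ht => by
    have := h j t ht; linarith)
  have hule : u (i, s) ≤ 0 := by
    by_cases hz : u (i, s) = 0
    · omega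
    · exact le_of_lt (hu i s hz hu0)
  have hvle : v (i, s) ≤ 0 := by
    by_cases hz : v (i, s) = 0
    · omega
    · exact le_of_lt (hv i s hz hv0)
  omega
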